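/- In the two-agent manipulation setting, let k₁ be the number of occurrences of agent 1 in π, enumerate O as o₁ ≻₁ o₂ ≻₁ ⋯ ≻₁ o_m, and define the greedy set S* by: starting from S = ∅, for j = 1,…,m in order, add o_j to S whenever S ∪ {o_j} is achievable by agent 1. Then S* is achievable by agent 1, |S*| = k₁, and for every lexicographic utility u₁ consistent with ≻₁ and every achievable set B with |B| = k₁, u₁(S*) ≥ u₁(B). -/

import Mathlib

/-- Sequential allocation: process the picking sequence in order; at each step the
agent whose turn it is receives his most-preferred (earliest in his ranking list)
item among those not yet allocated. Returns each agent's allocation. -/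
def seqAlloc {A I : Type*} [DecidableEq A] [DecidableEq I]
    (prefs : A → List I) : List A → Finset I → A → Finset I
  | [], _ => fun _ => ∅
  | a :: rest, rem =>
    match (prefs a).find? (fun o => decide (o ∈ rem)) with
    | none => seqAlloc prefs rest rem
    | some o => fun j =>
        if j = a then insert o (seqAlloc prefs rest (rem.erase o) j)
        else seqAlloc prefs rest (rem.erase o) j

/-- A report (strict linear order) over the item set `O`, given as a ranking list:
most preferred item first. -/
def IsReport {I : Type*} [DecidableEq I] (O : Finset I) (p : List I) : Prop :=
  p.Nodup ∧ ∀ o, o ∈ p ↔ o ∈ O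

/-- Two-agent sequential allocation: agent `0` ("agent 1") reports `p1`,
agent `1` ("agent 2") reports `p2`. -/
def alloc2 {I : Type*} [DecidableEq I] (p1 p2 : List I)
    (π : List (Fin 2)) (O : Finset I) : Fin 2 → Finset I :=
  seqAlloc (fun a => if a = 0 then p1 else p2) π O

/-- `S` is achievable by agent 1: some report gives agent 1 an allocation including `S`. -/
def Achievable {I : Type*} [DecidableEq I] (p2 : List I) (π : List (Fin 2))
    (O : Finset I) (S : Finset I) : Prop :=
  ∃ p1, IsReport O p1 ∧ S ⊆ alloc2 p1 p2 π O 0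

/-- `o` is strictly preferred to `o'` in the ranking list `p`. -/
def Prefers {I : Type*} [DecidableEq I] (p : List I) (o o' : I) : Prop :=
  p.idxOf o < p.idxOf o'

instance {I : Type*} [DecidableEq I] (p : List I) (o o' : I) : Decidable (Prefers p o o') :=
  inferInstanceAs (Decidable (_ < _))

/-- `u` is an additive utility consistent with the ranking `p` on item set `O`. -/
def Consistent {I : Type*} [DecidableEq I] (O : Finset I) (p : List I) (u : I → ℝ) : Prop :=
  (∀ o ∈ O, 0 < u o) ∧ ∀ o ∈ O, ∀ o' ∈ O, u o' < u o ↔ Prefers p o o'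

open Classical in
/-- Greedy construction of a set: go through the ranking list in order and add an
item whenever the resulting set stays in the given (achievability) predicate. -/
noncomputable def greedy {I : Type*} [DecidableEq I]
    (ach : Finset I → Prop) : List I → Finset I → Finset I
  | [], S => S
  | o :: rest, S =>
    if ach (insert o S) then greedy ach rest (insert o S) else greedy ach rest S

section Helpers

variable {I : Type*} [DecidableEq I]

lemma seqAlloc_subset {A : Type*} [DecidableEq A] (prefs : A → List I) :
    ∀ (π : List A) (rem : Finset I) (j : A), seqAlloc prefs π rem j ⊆ rem := by
  intro π
  induction π with
  | nil => intro rem j; simp [seqAlloc]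
  | cons a rest ih =>
    intro rem j
    rw [seqAlloc]
    rcases h : (prefs a).find? (fun o => decide (o ∈ rem)) with _ | o
    · exact ih rem j
    · have ho : o ∈ rem := by simpa using List.find?_some h
      by_cases hj : j = a
      · simp only [hj, if_pos rfl]
        exact Finset.insert_subset ho ((ih _ _).trans (Finset.erase_subset _ _))
      · simp only [if_neg hj]
        exact (ih _ _).trans (Finset.erase_subset _ _)

lemma seqAlloc_card {A : Type*} [DecidableEq A] (prefs : A → List I) (O : Finset I)
    (hall : ∀ a, ∀ x ∈ O, x ∈ prefs a) :
    ∀ (π : List A) (rem : Finset I), rem ⊆ O → π.length ≤ rem.card →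
      ∀ j, (seqAlloc prefs π rem j).card = π.count j := by
  intro π
  induction π with
  | nil => intro rem _ _ j; simp [seqAlloc]
  | cons a rest ih =>
    intro rem hremO hlen j
    rw [seqAlloc]
    rcases h : (prefs a).find? (fun o => decide (o ∈ rem)) with _ | o
    · exfalso
      have hne : rem.Nonempty := Finset.card_pos.mp (by
        have : 1 ≤ rem.card := le_trans (by simp) hlen
        omega)
      obtain ⟨x, hx⟩ := hne
      have : (prefs a).find? (fun o => decide (o ∈ rem)) ≠ none := by
        rw [← Option.isSome_iff_ne_none, List.find?_isSome]
        exact ⟨x, hall a x (hremO hx), by simpa using hx⟩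
      exact this h
    · dsimp only
      have ho : o ∈ rem := by simpa using List.find?_some h
      have herO : rem.erase o ⊆ O := (Finset.erase_subset _ _).trans hremO
      have hercard : rest.length ≤ (rem.erase o).card := by
        rw [Finset.card_erase_of_mem ho]
        simp only [List.length_cons] at hlen
        omega
      by_cases hj : j = a
      · subst hj
        rw [if_pos rfl]
        have hno : o ∉ seqAlloc prefs rest (rem.erase o) j :=
          fun hmem => (Finset.notMem_erase o rem) (seqAlloc_subset prefs rest _ j hmem)
        rw [Finset.card_insert_of_notMem hno, ih _ herO hercard j]
        simp [List.count_cons]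
      · simp only [if_neg hj]
        rw [ih _ herO hercard j]
        simp [List.count_cons, Ne.symm hj]

lemma greedy_subset (ach : Finset I → Prop) :
    ∀ (l : List I) (S : Finset I), S ⊆ greedy ach l S := by
  intro l
  induction l with
  | nil => intro S; rw [greedy]
  | cons a rest ih =>
    intro S
    rw [greedy]
    by_cases h : ach (insert a S)
    · rw [if_pos h]; exact (Finset.subset_insert a S).trans (ih _)
    · rw [if_neg h]; exact ih _

lemma greedy_ach (ach : Finset I → Prop) :
    ∀ (l : List I) (S : Finset I), ach S → ach (greedy ach l S) := by
  intro l
  induction l with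
  | nil => intro S hS; rw [greedy]; exact hS
  | cons a rest ih =>
    intro S hS
    rw [greedy]
    by_cases h : ach (insert a S)
    · rw [if_pos h]; exact ih _ h
    · rw [if_neg h]; exact ih _ hS

lemma greedy_maximal (ach : Finset I → Prop)
    (dc : ∀ S T : Finset I, S ⊆ T → ach T → ach S) :
    ∀ (l : List I) (S : Finset I) (o : I), o ∈ l → o ∉ greedy ach l S →
      ¬ ach (insert o (greedy ach l S)) := by
  intro l
  induction l with
  | nil => intro S o ho; simp at ho
  | cons a rest ih =>
    intro S o ho hno
    rw [greedy] at hno ⊢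
    by_cases h : ach (insert a S)
    · rw [if_pos h] at hno ⊢
      rcases List.mem_cons.mp ho with rfl | ho'
      · exact absurd (greedy_subset ach rest _ (Finset.mem_insert_self o S)) hno
      · exact ih _ o ho' hno
    · rw [if_neg h] at hno ⊢
      rcases List.mem_cons.mp ho with rfl | ho'
      · intro hach
        exact h (dc _ _ (Finset.insert_subset_insert _ (greedy_subset ach rest S)) hach)
      · exact ih _ o ho' hno

lemma greedy_dominates (ach : Finset I → Prop)
    (dc : ∀ S T : Finset I, S ⊆ T → ach T → ach S) :
    ∀ (l : List I) (S B : Finset I), ach B → S ⊆ B → (∀ x ∈ B, x ∈ S ∨ x ∈ l) →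
      B ⊆ greedy ach l S ∨
      ∃ l₁ o l₂, l = l₁ ++ o :: l₂ ∧ o ∈ greedy ach l S ∧ o ∉ B ∧
        ∀ o' ∈ B, o' ∉ greedy ach l S → o' ∈ l₂ := by
  intro l
  induction l with
  | nil =>
    intro S B _ hSB hBl
    left
    rw [greedy]
    intro x hx
    rcases hBl x hx with h | h
    · exact h
    · simp at h
  | cons a rest ih =>
    intro S B hB hSB hBl
    rw [greedy]
    by_cases h : ach (insert a S)
    · rw [if_pos h]
      by_cases haB : a ∈ B
      · have hSB' : insert a S ⊆ B := Finset.insert_subset haB hSB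
        have hBl' : ∀ x ∈ B, x ∈ insert a S ∨ x ∈ rest := by
          intro x hx
          rcases hBl x hx with h' | h'
          · exact Or.inl (Finset.mem_insert_of_mem h')
          · rcases List.mem_cons.mp h' with rfl | h''
            · exact Or.inl (Finset.mem_insert_self _ _)
            · exact Or.inr h''
        rcases ih (insert a S) B hB hSB' hBl' with h' | ⟨l₁, o, l₂, heq, hoG, hoB, hrest⟩
        · exact Or.inl h'
        · exact Or.inr ⟨a :: l₁, o, l₂, by rw [heq]; rfl, hoG, hoB, hrest⟩
      · right
        refine ⟨[], a, rest, rfl, greedy_subset ach rest _ (Finset.mem_insert_self a S), haB, ?_⟩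
        intro o' ho' _
        rcases hBl o' ho' with h' | h'
        · exact absurd (greedy_subset ach rest _ (Finset.mem_insert_of_mem h'))
            (by assumption)
        · rcases List.mem_cons.mp h' with rfl | h''
          · exact absurd ho' haB
          · exact h''
    · rw [if_neg h]
      have haB : a ∉ B := fun haB => h (dc _ _ (Finset.insert_subset haB hSB) hB)
      have hBl' : ∀ x ∈ B, x ∈ S ∨ x ∈ rest := by
        intro x hx
        rcases hBl x hx with h' | h'
        · exact Or.inl h'
        · rcases List.mem_cons.mp h' with rfl | h''
          · exact absurd hx haB
          · exact Or.inr h''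
      rcases ih S B hB hSB hBl' with h' | ⟨l₁, o, l₂, heq, hoG, hoB, hrest⟩
      · exact Or.inl h'
      · exact Or.inr ⟨a :: l₁, o, l₂, by rw [heq]; rfl, hoG, hoB, hrest⟩

end Helpers
/-- Enumerate `O` as `o₁ ≻₁ ⋯ ≻₁ o_m` (the true ranking list `p1`)
and let `S*` be the greedy set obtained by adding `o_j` whenever the current set
together with `o_j` is achievable.  Then `S*` is achievable, `|S*| = k₁` (the number
of turns of agent 1 in `π`), and for every lexicographic utility `u` consistent
with ≻₁ and every achievable `B` with `|B| = k₁`, `u(S*) ≥ u(B)`. -/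
theorem statement4 {I : Type*} [DecidableEq I]
    (O : Finset I) (π : List (Fin 2)) (hπ : π.length = O.card)
    (p2 : List I) (hp2 : IsReport O p2)
    (p1 : List I) (hp1 : IsReport O p1)  -- agent 1's true preference ≻₁
    (u : I → ℝ) (hu : Consistent O p1 u)
    (hlex : ∀ o ∈ O, (∑ o' ∈ O.filter (fun o' => Prefers p1 o o'), u o') < u o) :
    Achievable p2 π O (greedy (Achievable p2 π O) p1 ∅) ∧
    (greedy (Achievable p2 π O) p1 ∅).card = π.count 0 ∧
    ∀ B : Finset I, Achievable p2 π O B → B.card = π.count 0 →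
      ∑ o ∈ B, u o ≤ ∑ o ∈ greedy (Achievable p2 π O) p1 ∅, u o := by
  set ach := Achievable p2 π O with hachdef
  have dc : ∀ S T : Finset I, S ⊆ T → ach T → ach S := by
    rintro S T hST ⟨p, hp, hsub⟩
    exact ⟨p, hp, hST.trans hsub⟩
  have hall : ∀ (p : List I), IsReport O p →
      ∀ (a : Fin 2), ∀ x ∈ O, x ∈ (if a = 0 then p else p2) := by
    intro p hp a x hx
    by_cases h : a = 0
    · simpa [h] using (hp.2 x).2 hx
    · simpa [h] using (hp2.2 x).2 hx
  have hcard : ∀ p : List I, IsReport O p → ∀ j, (alloc2 p p2 π O j).card = π.count j := by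
    intro p hp j
    exact seqAlloc_card _ O (hall p hp) π O le_rfl (le_of_eq hπ) j
  have hsubO : ∀ (p : List I) (j : Fin 2), alloc2 p p2 π O j ⊆ O := by
    intro p j
    exact seqAlloc_subset _ π O j
  have achO : ∀ S, ach S → S ⊆ O := by
    rintro S ⟨p, hp, hs⟩
    exact hs.trans (hsubO p 0)
  have achempty : ach ∅ := ⟨p1, hp1, Finset.empty_subset _⟩
  set G := greedy ach p1 ∅ with hG
  have hGach : ach G := greedy_ach ach p1 ∅ achempty
  have hGO : G ⊆ O := achO G hGach
  have hupos : ∀ o ∈ O, 0 < u o := hu.1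
  have hGcard : G.card = π.count 0 := by
    obtain ⟨p, hp, hs⟩ := hGach
    have hAl : (alloc2 p p2 π O 0).card = π.count 0 := hcard p hp 0
    by_contra hne
    have hlt : G.card < (alloc2 p p2 π O 0).card := by
      rw [hAl]
      exact lt_of_le_of_ne (hAl ▸ Finset.card_le_card hs) hne
    have hneq : G ≠ alloc2 p p2 π O 0 := by
      intro h; rw [h] at hlt; exact lt_irrefl _ hlt
    obtain ⟨o, hoAl, hoG⟩ := (Finset.ssubset_iff_of_subset hs).mp ⟨hs, fun h => hneq
      (Finset.Subset.antisymm hs h)⟩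
    have hop1 : o ∈ p1 := (hp1.2 o).2 (hsubO p 0 hoAl)
    have : ach (insert o G) := ⟨p, hp, Finset.insert_subset hoAl hs⟩
    exact greedy_maximal ach dc p1 ∅ o hop1 hoG this
  refine ⟨greedy_ach ach p1 ∅ achempty, hGcard, ?_⟩
  intro B hB _
  have hBO : B ⊆ O := achO B hB
  rcases greedy_dominates ach dc p1 ∅ B hB (Finset.empty_subset _)
      (fun x hx => Or.inr ((hp1.2 x).2 (hBO hx))) with hBG | ⟨l₁, o, l₂, heq, hoG, hoB, hrest⟩
  · exact Finset.sum_le_sum_of_subset_of_nonneg hBG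
      (fun i hi _ => (hupos i (hGO hi)).le)
  · have hoO : o ∈ O := hGO hoG
    have hnd : (l₁ ++ o :: l₂).Nodup := heq ▸ hp1.1
    have hol₁ : o ∉ l₁ := by
      have := (List.nodup_append'.mp hnd).2.2
      exact fun h => this h List.mem_cons_self
    have hpref : ∀ o' ∈ B, o' ∉ G → Prefers p1 o o' := by
      intro o' hB' hG'
      have h2 : o' ∈ l₂ := hrest o' hB' hG'
      have ho'l₁ : o' ∉ l₁ := by
        have := (List.nodup_append'.mp hnd).2.2
        exact fun h => this h (List.mem_cons_of_mem o h2)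
      have ho'o : o ≠ o' := by
        have := (List.nodup_append.mp hnd).2.1
        rintro rfl
        exact (List.nodup_cons.mp this).1 h2
      unfold Prefers
      rw [heq, List.idxOf_append_of_notMem hol₁,
        List.idxOf_append_of_notMem ho'l₁,
        List.idxOf_cons_self, List.idxOf_cons_ne _ ho'o]
      omega
    have hsplit : ∑ o' ∈ B, u o' = ∑ o' ∈ B ∩ G, u o' + ∑ o' ∈ B \ G, u o' := by
      rw [← Finset.filter_mem_eq_inter, Finset.sdiff_eq_filter,
        Finset.sum_filter_add_sum_filter_not]
    have h1 : ∑ o' ∈ B \ G, u o' ≤ ∑ o' ∈ O.filter (fun o' => Prefers p1 o o'), u o' := by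
      apply Finset.sum_le_sum_of_subset_of_nonneg
      · intro x hx
        rw [Finset.mem_filter]
        exact ⟨hBO (Finset.mem_sdiff.mp hx).1,
          hpref x (Finset.mem_sdiff.mp hx).1 (Finset.mem_sdiff.mp hx).2⟩
      · intro i hi _
        exact (hupos i (Finset.mem_filter.mp hi).1).le
    have h2 := hlex o hoO
    have h3 : ∑ o' ∈ insert o (B ∩ G), u o' = u o + ∑ o' ∈ B ∩ G, u o' :=
      Finset.sum_insert (fun h => hoB (Finset.mem_inter.mp h).1)
    have h5 : ∑ o' ∈ insert o (B ∩ G), u o' ≤ ∑ o' ∈ G, u o' :=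
      Finset.sum_le_sum_of_subset_of_nonneg
        (Finset.insert_subset hoG Finset.inter_subset_right)
        (fun i hi _ => (hupos i (hGO hi)).le)
    linarith
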